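/- Consider a $\sqrt{\mu} \times \sqrt{\mu}$ grid in which each cell independently contains $\mathrm{Pois}(1)$ blue dots and $\mathrm{Pois}(1)$ red dots. With probability $1 - 1/\mathrm{poly}(\mu)$, every monotone lattice path through the grid has blue-red deviation at most $O(\sqrt{\mu} \log^2 \mu)$. -/

import Mathlib

open scoped Classical
open ProbabilityTheory

/-- Joint probability mass of a configuration of an `s × s` grid in which each cell
independently contains `Pois(1)` blue dots (first coordinate) and `Pois(1)` red dots
(second coordinate). -/
noncomputable def gridPMF {s : ℕ} (ω : Fin s × Fin s → ℕ × ℕ) : ℝ :=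
  ∏ c : Fin s × Fin s, poissonPMFReal 1 (ω c).1 * poissonPMFReal 1 (ω c).2

/-- Blue-red deviation of the monotone lattice path encoded by the monotone column
heights `h : Fin s → ℕ` (cell `(row i, column j)` lies below the path iff `i < h j`):
number of blue dots below the path minus number of red dots below the path. -/
noncomputable def pathDeviation {s : ℕ} (ω : Fin s × Fin s → ℕ × ℕ)
    (h : Fin s → ℕ) : ℤ :=
  ∑ c : Fin s × Fin s,
    if (c.1 : ℕ) < h c.2 then ((ω c).1 : ℤ) - ((ω c).2 : ℤ) else 0

open scoped ENNReal
open Finset Real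

namespace Stmt9Aux


lemma tsum_pi_fin {β : Type*} [Countable β] :
    ∀ (n : ℕ) (f : Fin n → β → ℝ≥0∞),
      (∑' ω : Fin n → β, ∏ i, f i (ω i)) = ∏ i, ∑' b, f i b := by
  intro n
  induction n with
  | zero =>
    intro f
    simp [tsum_eq_single (fun i => i.elim0 : Fin 0 → β) (fun g hg => absurd (funext fun i => i.elim0) (Ne.symm hg))]
  | succ n ih =>
    intro f
    rw [← (Fin.consEquiv (fun _ : Fin (n+1) => β)).tsum_eq]
    simp only [Fin.consEquiv_apply]
    rw [ENNReal.tsum_prod']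
    simp only [Fin.prod_univ_succ, Fin.cons_zero, Fin.cons_succ]
    calc (∑' (b : β) (g : Fin n → β), f 0 b * ∏ i : Fin n, f i.succ (g i))
        = ∑' (b : β), f 0 b * ∑' (g : Fin n → β), ∏ i : Fin n, f i.succ (g i) := by
          congr 1; ext b; rw [ENNReal.tsum_mul_left]
      _ = (∑' b, f 0 b) * ∏ i : Fin n, ∑' b, f i.succ b := by
          rw [ih (fun i => f i.succ), ENNReal.tsum_mul_right]

lemma tsum_pi_fintype {ι β : Type*} [Fintype ι] [Countable β] (f : ι → β → ℝ≥0∞) :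
    (∑' ω : ι → β, ∏ i, f i (ω i)) = ∏ i, ∑' b, f i b := by
  classical
  let e := Fintype.equivFin ι
  rw [← (Equiv.arrowCongr e (Equiv.refl β)).symm.tsum_eq]
  have : ∀ g : Fin (Fintype.card ι) → β,
      (∏ i, f i (((Equiv.arrowCongr e (Equiv.refl β)).symm g) i))
        = ∏ k, f (e.symm k) (g k) := by
    intro g
    rw [← e.prod_comp]
    simp [Equiv.arrowCongr]
  simp_rw [this]
  rw [tsum_pi_fin _ (fun k => f (e.symm k))]
  rw [← e.prod_comp]
  simp

open Finset Real ProbabilityTheory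

noncomputable def pp (n : ℕ) : ℝ := poissonPMFReal 1 n

lemma pp_def (n : ℕ) : pp n = rexp (-1) / n.factorial := by
  simp [pp, poissonPMFReal]

lemma pp_nonneg (n : ℕ) : 0 ≤ pp n := poissonPMFReal_nonneg

lemma exp_mul_pp (lam : ℝ) (n : ℕ) :
    rexp (lam * n) * pp n = rexp (-1) * ((rexp lam) ^ n / n.factorial) := by
  rw [pp_def, ← Real.exp_nat_mul, mul_comm (lam) (n:ℝ)]
  ring

lemma summable_exp_mul (lam : ℝ) : Summable (fun n : ℕ => rexp (lam * n) * pp n) := by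
  simp_rw [exp_mul_pp]
  exact (Real.summable_pow_div_factorial (rexp lam)).mul_left _

lemma tsum_exp_mul (lam : ℝ) :
    (∑' n : ℕ, rexp (lam * n) * pp n) = rexp (rexp lam - 1) := by
  simp_rw [exp_mul_pp]
  rw [tsum_mul_left]
  have h2 : (∑' n : ℕ, (rexp lam) ^ n / n.factorial) = rexp (rexp lam) := by
    have := (NormedSpace.expSeries_div_hasSum_exp (rexp lam)).tsum_eq
    rw [this, ← Real.exp_eq_exp_ℝ]
  rw [h2, ← Real.exp_add]
  ring_nf

lemma tsum_ofReal_exp_mul (lam : ℝ) :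
    (∑' n : ℕ, ENNReal.ofReal (rexp (lam * n) * pp n)) = ENNReal.ofReal (rexp (rexp lam - 1)) := by
  rw [← ENNReal.ofReal_tsum_of_nonneg (fun n => mul_nonneg (exp_nonneg _) (pp_nonneg n))
    (summable_exp_mul lam), tsum_exp_mul]

lemma tsum_cell (lam : ℝ) :
    (∑' q : ℕ × ℕ, ENNReal.ofReal (rexp (lam * ((q.1 : ℝ) - q.2)) * (pp q.1 * pp q.2)))
      = ENNReal.ofReal (rexp (rexp lam - 1) * rexp (rexp (-lam) - 1)) := by
  rw [ENNReal.tsum_prod']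
  have key : ∀ (n m : ℕ), rexp (lam * ((n : ℝ) - m)) * (pp n * pp m)
      = (rexp (lam * n) * pp n) * (rexp ((-lam) * m) * pp m) := by
    intro n m
    rw [mul_sub, Real.exp_sub]
    rw [show (-lam) * (m:ℝ) = -(lam * m) by ring, Real.exp_neg]
    field_simp
  simp_rw [key]
  have h1 : ∀ n : ℕ, (∑' m : ℕ, ENNReal.ofReal ((rexp (lam * n) * pp n) * (rexp ((-lam) * m) * pp m)))
      = ENNReal.ofReal (rexp (lam * n) * pp n) * ENNReal.ofReal (rexp (rexp (-lam) - 1)) := by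
    intro n
    rw [← tsum_ofReal_exp_mul (-lam), ← ENNReal.tsum_mul_left]
    congr 1; ext m
    rw [ENNReal.ofReal_mul (mul_nonneg (exp_nonneg _) (pp_nonneg n))]
  simp_rw [h1]
  rw [ENNReal.tsum_mul_right, tsum_ofReal_exp_mul lam,
    ← ENNReal.ofReal_mul (exp_nonneg _)]

lemma tsum_cell_one : (∑' q : ℕ × ℕ, ENNReal.ofReal (pp q.1 * pp q.2)) = 1 := by
  have := tsum_cell 0
  simp only [zero_mul, Real.exp_zero, one_mul, sub_self] at this
  simpa using this

lemma cell_mgf_le {lam : ℝ} (h0 : 0 ≤ lam) (h1 : lam ≤ 1) :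
    rexp (rexp lam - 1) * rexp (rexp (-lam) - 1) ≤ rexp ((3/2) * lam ^ 2) := by
  rw [← Real.exp_add, Real.exp_le_exp]
  have hb1 := Real.exp_bound (x := lam) (by rw [abs_of_nonneg h0]; exact h1) (n := 2) (by norm_num)
  have hb2 := Real.exp_bound (x := -lam) (by rw [abs_neg, abs_of_nonneg h0]; exact h1) (n := 2) (by norm_num)
  simp only [Finset.sum_range_succ, Finset.sum_range_zero] at hb1 hb2
  norm_num at hb1 hb2
  have e1 := (abs_le.mp hb1).2
  have e2 := (abs_le.mp hb2).2
  nlinarith [e1, e2]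

variable {s : ℕ}

lemma gridPMF_eq (ω : Fin s × Fin s → ℕ × ℕ) :
    gridPMF ω = ∏ c : Fin s × Fin s, (pp (ω c).1 * pp (ω c).2) := rfl

lemma gridPMF_nonneg (ω : Fin s × Fin s → ℕ × ℕ) : 0 ≤ gridPMF ω :=
  Finset.prod_nonneg fun c _ => mul_nonneg (pp_nonneg _) (pp_nonneg _)

noncomputable def Pr (E : (Fin s × Fin s → ℕ × ℕ) → Prop) : ℝ≥0∞ :=
  ∑' ω, if E ω then ENNReal.ofReal (gridPMF ω) else 0

lemma Pr_mono {E F : (Fin s × Fin s → ℕ × ℕ) → Prop} (h : ∀ ω, E ω → F ω) : Pr E ≤ Pr F := by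
  apply ENNReal.tsum_le_tsum
  intro ω
  by_cases hE : E ω
  · simp [hE, h ω hE]
  · simp [hE]

lemma Pr_total : Pr (fun _ : Fin s × Fin s → ℕ × ℕ => True) = 1 := by
  unfold Pr
  simp only [if_true]
  have : ∀ ω : Fin s × Fin s → ℕ × ℕ, ENNReal.ofReal (gridPMF ω)
      = ∏ c : Fin s × Fin s, ENNReal.ofReal (pp (ω c).1 * pp (ω c).2) := by
    intro ω
    rw [gridPMF_eq, ENNReal.ofReal_prod_of_nonneg]
    intro i _; exact mul_nonneg (pp_nonneg _) (pp_nonneg _)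
  simp_rw [this]
  rw [tsum_pi_fintype (fun (c : Fin s × Fin s) (q : ℕ × ℕ) => ENNReal.ofReal (pp q.1 * pp q.2))]
  simp [tsum_cell_one]

noncomputable def SX (A : Finset (Fin s × Fin s)) (ω : Fin s × Fin s → ℕ × ℕ) : ℤ :=
  ∑ c ∈ A, (((ω c).1 : ℤ) - ((ω c).2 : ℤ))

lemma chernoff (A : Finset (Fin s × Fin s)) (t lam : ℝ) (h0 : 0 < lam) (h1 : lam ≤ 1) :
    Pr (fun ω => t < (SX A ω : ℝ))
      ≤ ENNReal.ofReal (rexp ((3/2) * lam ^ 2 * A.card - lam * t)) := by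
  have step1 : Pr (fun ω => t < (SX A ω : ℝ))
      ≤ ∑' ω, ENNReal.ofReal (rexp (lam * ((SX A ω : ℝ) - t)) * gridPMF ω) := by
    apply ENNReal.tsum_le_tsum
    intro ω
    by_cases hE : t < (SX A ω : ℝ)
    · simp only [hE, if_true]
      apply ENNReal.ofReal_le_ofReal
      nlinarith [Real.one_le_exp (by nlinarith : (0:ℝ) ≤ lam * ((SX A ω : ℝ) - t)),
        gridPMF_nonneg ω]
    · simp [hE]
  refine le_trans step1 ?_
  have factor : ∀ ω : Fin s × Fin s → ℕ × ℕ,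
      rexp (lam * ((SX A ω : ℝ) - t)) * gridPMF ω
        = rexp (- (lam * t)) * ∏ c : Fin s × Fin s,
            ((if c ∈ A then rexp (lam * (((ω c).1 : ℝ) - ((ω c).2 : ℝ))) else 1)
              * (pp (ω c).1 * pp (ω c).2)) := by
    intro ω
    rw [Finset.prod_mul_distrib]
    have : (∏ c : Fin s × Fin s, (if c ∈ A then rexp (lam * (((ω c).1 : ℝ) - ((ω c).2 : ℝ))) else 1))
        = rexp (lam * (SX A ω : ℝ)) := by
      rw [Finset.prod_ite_mem, Finset.univ_inter, ← Real.exp_sum]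
      congr 1
      rw [SX]
      push_cast
      rw [Finset.mul_sum]
    rw [this, gridPMF_eq]
    rw [mul_sub, Real.exp_sub, Real.exp_neg]
    field_simp
  simp_rw [factor]
  have expand : ∀ ω : Fin s × Fin s → ℕ × ℕ,
      ENNReal.ofReal (rexp (- (lam * t)) * ∏ c : Fin s × Fin s,
          ((if c ∈ A then rexp (lam * (((ω c).1 : ℝ) - ((ω c).2 : ℝ))) else 1)
            * (pp (ω c).1 * pp (ω c).2)))
        = ENNReal.ofReal (rexp (- (lam * t))) * ∏ c : Fin s × Fin s,
            ENNReal.ofReal ((if c ∈ A then rexp (lam * (((ω c).1 : ℝ) - ((ω c).2 : ℝ))) else 1)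
              * (pp (ω c).1 * pp (ω c).2)) := by
    intro ω
    rw [ENNReal.ofReal_mul (exp_nonneg _), ENNReal.ofReal_prod_of_nonneg]
    intro i _
    exact mul_nonneg (by positivity) (mul_nonneg (pp_nonneg _) (pp_nonneg _))
  simp_rw [expand]
  rw [ENNReal.tsum_mul_left]
  rw [tsum_pi_fintype (fun (c : Fin s × Fin s) (q : ℕ × ℕ) =>
    ENNReal.ofReal ((if c ∈ A then rexp (lam * ((q.1 : ℝ) - (q.2 : ℝ))) else 1) * (pp q.1 * pp q.2)))]
  have cellval : ∀ c : Fin s × Fin s,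
      (∑' q : ℕ × ℕ, ENNReal.ofReal ((if c ∈ A then rexp (lam * ((q.1 : ℝ) - (q.2 : ℝ))) else 1) * (pp q.1 * pp q.2)))
        ≤ if c ∈ A then ENNReal.ofReal (rexp ((3/2) * lam ^ 2)) else 1 := by
    intro c
    by_cases hc : c ∈ A
    · simp only [hc, if_true]
      rw [tsum_cell lam]
      exact ENNReal.ofReal_le_ofReal (cell_mgf_le h0.le h1)
    · simp only [hc, if_false, one_mul]
      rw [tsum_cell_one]
  calc ENNReal.ofReal (rexp (-(lam * t))) * ∏ c : Fin s × Fin s,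
        (∑' q : ℕ × ℕ, ENNReal.ofReal ((if c ∈ A then rexp (lam * ((q.1 : ℝ) - (q.2 : ℝ))) else 1) * (pp q.1 * pp q.2)))
      ≤ ENNReal.ofReal (rexp (-(lam * t))) * ∏ c : Fin s × Fin s,
        (if c ∈ A then ENNReal.ofReal (rexp ((3/2) * lam ^ 2)) else 1) := by
        apply mul_le_mul_right
        exact Finset.prod_le_prod' (fun i _ => cellval i)
    _ = ENNReal.ofReal (rexp (-(lam * t))) * ENNReal.ofReal (rexp ((3/2) * lam ^ 2)) ^ A.card := by
        rw [Finset.prod_ite_mem, Finset.univ_inter, Finset.prod_const]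
    _ ≤ ENNReal.ofReal (rexp ((3/2) * lam ^ 2 * A.card - lam * t)) := by
        rw [← ENNReal.ofReal_pow (exp_nonneg _), ← ENNReal.ofReal_mul (exp_nonneg _)]
        apply ENNReal.ofReal_le_ofReal
        rw [← Real.exp_nat_mul, ← Real.exp_add]
        apply Real.exp_le_exp.mpr
        ring_nf
        exact le_refl _

lemma Pr_le_one (E : (Fin s × Fin s → ℕ × ℕ) → Prop) : Pr E ≤ 1 := by
  rw [← Pr_total (s := s)]
  exact Pr_mono fun ω _ => trivial

lemma Pr_exists_le {ι : Type*} (t : Finset ι) (E : ι → (Fin s × Fin s → ℕ × ℕ) → Prop) :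
    Pr (fun ω => ∃ i ∈ t, E i ω) ≤ ∑ i ∈ t, Pr (E i) := by
  unfold Pr
  rw [← Summable.tsum_finsetSum (fun i _ => ENNReal.summable)]
  apply ENNReal.tsum_le_tsum
  intro ω
  by_cases hE : ∃ i ∈ t, E i ω
  · rw [if_pos hE]
    obtain ⟨i0, hi0, hEi0⟩ := hE
    calc ENNReal.ofReal (gridPMF ω) = (if E i0 ω then ENNReal.ofReal (gridPMF ω) else 0) := by
          rw [if_pos hEi0]
      _ ≤ ∑ i ∈ t, (if E i ω then ENNReal.ofReal (gridPMF ω) else 0) :=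
          Finset.single_le_sum (f := fun i => if E i ω then ENNReal.ofReal (gridPMF ω) else 0)
            (fun i _ => zero_le) hi0
  · simp [hE]

lemma Pr_or (E F : (Fin s × Fin s → ℕ × ℕ) → Prop) :
    Pr (fun ω => E ω ∨ F ω) ≤ Pr E + Pr F := by
  unfold Pr
  rw [← ENNReal.tsum_add]
  apply ENNReal.tsum_le_tsum
  intro ω
  by_cases hE : E ω <;> by_cases hF : F ω <;> simp [hE, hF]

lemma Pr_add_compl (E : (Fin s × Fin s → ℕ × ℕ) → Prop) : Pr E + Pr (fun ω => ¬ E ω) = 1 := by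
  rw [← Pr_total (s := s)]
  unfold Pr
  rw [← ENNReal.tsum_add]
  congr 1
  ext ω
  by_cases hE : E ω <;> simp [hE]

lemma good_ge (E : (Fin s × Fin s → ℕ × ℕ) → Prop) (ε : ℝ) (hε : 0 ≤ ε)
    (hbad : Pr (fun ω => ¬ E ω) ≤ ENNReal.ofReal ε) :
    (∑' ω : Fin s × Fin s → ℕ × ℕ, if E ω then gridPMF ω else 0) ≥ 1 - ε := by
  have hreal : (∑' ω : Fin s × Fin s → ℕ × ℕ, if E ω then gridPMF ω else 0) = (Pr E).toReal := by
    rw [Pr, ENNReal.tsum_toReal_eq (fun ω => by split <;> simp)]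
    congr 1
    ext ω
    split
    · rw [ENNReal.toReal_ofReal (gridPMF_nonneg ω)]
    · simp
  rw [hreal]
  have hadd := Pr_add_compl E
  have hE1 : Pr E ≤ 1 := Pr_le_one E
  have hB1 : Pr (fun ω => ¬ E ω) ≤ 1 := Pr_le_one _
  have htadd : (Pr E).toReal + (Pr (fun ω => ¬ E ω)).toReal = 1 := by
    rw [← ENNReal.toReal_add (by exact (lt_of_le_of_lt hE1 ENNReal.one_lt_top).ne)
      (by exact (lt_of_le_of_lt hB1 ENNReal.one_lt_top).ne), hadd, ENNReal.toReal_one]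
  have hbadr : (Pr (fun ω => ¬ E ω)).toReal ≤ ε := ENNReal.toReal_le_of_le_ofReal hε hbad
  linarith


lemma Pr_False : Pr (fun _ : Fin s × Fin s → ℕ × ℕ => False) = 0 := by
  unfold Pr
  simp

variable {s : ℕ}

-- fiber counting lemma
lemma sum_div_le (F : ℕ → ℕ) (u n : ℕ) (hu : 0 < u) :
    (∑ j ∈ range n, F (j / u)) ≤ u * ∑ q ∈ range n, F q := by
  rw [← Finset.sum_fiberwise_of_maps_to (g := fun j => j / u) (t := range n)
    (fun j hj => by
      simp only [mem_range] at hj ⊢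
      exact lt_of_le_of_lt (Nat.div_le_self j u) hj)]
  rw [Finset.mul_sum]
  apply Finset.sum_le_sum
  intro q _
  have : ∀ j ∈ (range n).filter (fun j => j / u = q), F (j / u) = F q := by
    intro j hj
    simp only [mem_filter] at hj
    rw [hj.2]
  rw [Finset.sum_congr rfl this, Finset.sum_const, smul_eq_mul]
  apply Nat.mul_le_mul_right
  calc ((range n).filter (fun j => j / u = q)).card
      ≤ (Finset.Ico (u * q) (u * q + u)).card := by
        apply Finset.card_le_card
        intro j hj
        simp only [mem_filter, mem_range] at hj
        simp only [Finset.mem_Ico]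
        constructor
        · rw [← hj.2, mul_comm]; exact Nat.div_mul_le_self j u
        · have h3 : j / u < q + 1 := by omega
          rw [Nat.div_lt_iff_lt_mul hu] at h3
          calc j < (q + 1) * u := h3
            _ = u * q + u := by ring
    _ = u := by rw [Nat.card_Ico]; omega

-- telescoping lemma
lemma sum_F_le (H : ℕ → ℕ) (hH : Monotone H) (u : ℕ) (hu : 0 < u) (n : ℕ) :
    (∑ q ∈ range n, (H (u * q) - H (u * (2 * (q / 2))))) ≤ H (u * (2 * (n / 2))) - H 0 := by
  induction n with
  | zero => simp
  | succ n ih =>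
    rw [Finset.sum_range_succ]
    rcases Nat.even_or_odd n with he | ho
    · obtain ⟨m, hm⟩ := he
      have h1 : 2 * (n / 2) = n := by omega
      have h2 : 2 * ((n + 1) / 2) = n := by omega
      rw [h1] at ih
      rw [h1, h2]
      omega
    · obtain ⟨m, hm⟩ := ho
      have h1 : 2 * (n / 2) = n - 1 := by omega
      have h2 : 2 * ((n + 1) / 2) = n + 1 := by omega
      rw [h1] at ih
      rw [h1, h2]
      have m1 : H 0 ≤ H (u * (n - 1)) := hH (Nat.zero_le _)
      have m2 : H (u * (n - 1)) ≤ H (u * n) := hH (Nat.mul_le_mul_left u (by omega))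
      have m3 : H (u * n) ≤ H (u * (n + 1)) := hH (Nat.mul_le_mul_left u (by omega))
      omega

-- the area bound
lemma area_bound (H : ℕ → ℕ) (hH : Monotone H) (hHs : ∀ j, H j ≤ s) (u : ℕ) (hu : 0 < u) :
    (∑ j ∈ range s, (H (u * (j / u)) - H ((2 * u) * (j / (2 * u))))) ≤ u * s := by
  have key : ∀ j : ℕ, H ((2 * u) * (j / (2 * u))) = H (u * (2 * ((j / u) / 2))) := by
    intro j
    congr 1
    rw [Nat.div_div_eq_div_mul]
    ring_nf
  simp_rw [key]
  calc (∑ j ∈ range s, (H (u * (j / u)) - H (u * (2 * ((j / u) / 2)))))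
      = ∑ j ∈ range s, (fun q => H (u * q) - H (u * (2 * (q / 2)))) (j / u) := rfl
    _ ≤ u * ∑ q ∈ range s, (H (u * q) - H (u * (2 * (q / 2)))) := by exact sum_div_le (fun q => H (u * q) - H (u * (2 * (q / 2)))) u s hu
    _ ≤ u * (H (u * (2 * (s / 2))) - H 0) := Nat.mul_le_mul_left u (sum_F_le H hH u hu s)
    _ ≤ u * s := Nat.mul_le_mul_left u (by have := hHs (u * (2 * (s / 2))); omega)

noncomputable def Reg (s : ℕ) (g₁ g₂ : ℕ → ℕ) : Finset (Fin s × Fin s) :=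
  univ.filter (fun c => g₂ (c.2 : ℕ) ≤ (c.1 : ℕ) ∧ (c.1 : ℕ) < g₁ (c.2 : ℕ))

noncomputable def Dev (s : ℕ) (g : ℕ → ℕ) (ω : Fin s × Fin s → ℕ × ℕ) : ℤ :=
  ∑ c : Fin s × Fin s, if (c.1 : ℕ) < g (c.2 : ℕ) then ((ω c).1 : ℤ) - ((ω c).2 : ℤ) else 0

lemma Reg_congr {g₁ g₂ g₁' g₂' : ℕ → ℕ} (h1 : ∀ j < s, g₁ j = g₁' j) (h2 : ∀ j < s, g₂ j = g₂' j) :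
    Reg s g₁ g₂ = Reg s g₁' g₂' := by
  unfold Reg
  apply Finset.filter_congr
  intro c _
  rw [h1 _ c.2.isLt, h2 _ c.2.isLt]

lemma Dev_congr {g g' : ℕ → ℕ} (h : ∀ j < s, g j = g' j) (ω : Fin s × Fin s → ℕ × ℕ) :
    Dev s g ω = Dev s g' ω := by
  unfold Dev
  apply Finset.sum_congr rfl
  intro c _
  rw [h _ c.2.isLt]

lemma Dev_sub_eq {g₁ g₂ : ℕ → ℕ} (hle : ∀ j, g₂ j ≤ g₁ j) (ω : Fin s × Fin s → ℕ × ℕ) :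
    Dev s g₁ ω - Dev s g₂ ω = SX (Reg s g₁ g₂) ω := by
  unfold Dev SX Reg
  rw [Finset.sum_filter, ← Finset.sum_sub_distrib]
  apply Finset.sum_congr rfl
  intro c _
  set X := ((ω c).1 : ℤ) - ((ω c).2 : ℤ)
  by_cases hA : (c.1 : ℕ) < g₂ (c.2 : ℕ)
  · have hB : (c.1 : ℕ) < g₁ (c.2 : ℕ) := lt_of_lt_of_le hA (hle _)
    have hC : ¬ (g₂ (c.2 : ℕ) ≤ (c.1 : ℕ)) := not_le.mpr hA
    rw [if_pos hA, if_pos hB, if_neg (fun hcon => hC hcon.1)]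
    ring
  · by_cases hB : (c.1 : ℕ) < g₁ (c.2 : ℕ)
    · rw [if_pos hB, if_neg hA, if_pos ⟨not_lt.mp hA, hB⟩]
      ring
    · rw [if_neg hA, if_neg hB, if_neg (fun hcon => hB hcon.2)]
      ring

lemma card_Reg_le (g₁ g₂ : ℕ → ℕ) :
    (Reg s g₁ g₂).card ≤ ∑ j ∈ range s, (g₁ j - g₂ j) := by
  unfold Reg
  rw [Finset.card_filter]
  rw [Fintype.sum_prod_type]
  rw [Finset.sum_comm]
  calc (∑ j : Fin s, ∑ i : Fin s, if g₂ (j : ℕ) ≤ (i : ℕ) ∧ (i : ℕ) < g₁ (j : ℕ) then 1 else 0)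
      ≤ ∑ j : Fin s, (g₁ (j : ℕ) - g₂ (j : ℕ)) := by
        apply Finset.sum_le_sum
        intro j _
        rw [Fin.sum_univ_eq_sum_range (fun i => if g₂ (j : ℕ) ≤ i ∧ i < g₁ (j : ℕ) then 1 else 0)]
        rw [← Finset.card_filter]
        calc ((range s).filter (fun i => g₂ (j : ℕ) ≤ i ∧ i < g₁ (j : ℕ))).card
            ≤ (Finset.Ico (g₂ (j : ℕ)) (g₁ (j : ℕ))).card := by
              apply Finset.card_le_card
              intro x hx
              simp only [mem_filter, mem_range, Finset.mem_Ico] at hx ⊢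
              omega
          _ = g₁ (j : ℕ) - g₂ (j : ℕ) := Nat.card_Ico _ _
    _ = ∑ j ∈ range s, (g₁ j - g₂ j) :=
        Fin.sum_univ_eq_sum_range (fun j => g₁ j - g₂ j) s

lemma event_bound (A : Finset (Fin s × Fin s)) (m : ℕ) (hm : A.card ≤ m) (hm0 : 0 < m)
    (D : ℝ) (hD : 0 < D) :
    Pr (fun ω => (3 * Real.sqrt (m * D) + 3 * D) < (SX A ω : ℝ))
      ≤ ENNReal.ofReal (rexp (-D)) := by
  have hmR : (0:ℝ) < m := by exact_mod_cast hm0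
  have hcard : (A.card : ℝ) ≤ m := by exact_mod_cast hm
  have hcard0 : (0:ℝ) ≤ A.card := by positivity
  rcases le_or_gt D m with hDm | hDm
  · set lam := Real.sqrt (D / m) with hlam
    have hlam0 : 0 < lam := Real.sqrt_pos.mpr (by positivity)
    have hlam1 : lam ≤ 1 := by
      rw [hlam, show (1:ℝ) = Real.sqrt 1 by simp]
      apply Real.sqrt_le_sqrt
      rw [div_le_one hmR]
      exact hDm
    refine le_trans (chernoff A _ lam hlam0 hlam1) (ENNReal.ofReal_le_ofReal ?_)
    apply Real.exp_le_exp.mpr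
    have hsq : lam ^ 2 = D / m := Real.sq_sqrt (by positivity)
    have hst : lam * Real.sqrt (m * D) = D := by
      rw [hlam, ← Real.sqrt_mul (by positivity)]
      rw [show D / m * (m * D) = D ^ 2 by field_simp]
      exact Real.sqrt_sq hD.le
    have he : D / m * m = D := div_mul_cancel₀ D hmR.ne'
    have hdiv0 : 0 ≤ D / m := div_nonneg hD.le hmR.le
    have h1 : (3/2) * lam ^ 2 * A.card ≤ (3/2) * D := by
      rw [hsq]
      nlinarith [he, hcard, hdiv0]
    nlinarith [hst, hlam0.le, hD.le, mul_nonneg hlam0.le hD.le]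
  · refine le_trans (chernoff A _ 1 one_pos le_rfl) (ENNReal.ofReal_le_ofReal ?_)
    apply Real.exp_le_exp.mpr
    have hs0 : 0 ≤ Real.sqrt (m * D) := Real.sqrt_nonneg _
    nlinarith [hcard, hDm]

def Kl (s ℓ : ℕ) : ℕ := s / 2^ℓ + 1
noncomputable def Dl (s : ℕ) (c : ℝ) (ℓ : ℕ) : ℝ :=
  (Kl s ℓ) * Real.log (s+1) + (2*c+2) * Real.log s
noncomputable def tl (s : ℕ) (c : ℝ) (ℓ : ℕ) : ℝ :=
  3 * Real.sqrt ((2^ℓ * s : ℕ) * Dl s c ℓ) + 3 * Dl s c ℓ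
noncomputable def Dtop (s : ℕ) (c : ℝ) : ℝ := Real.log (s+1) + (2*c+2) * Real.log s
noncomputable def ttop (s : ℕ) (c : ℝ) : ℝ :=
  3 * Real.sqrt ((s * s : ℕ) * Dtop s c) + 3 * Dtop s c

noncomputable def extv (s u : ℕ) (v : Fin (s/u + 1) → Fin (s+1)) : ℕ → ℕ :=
  fun j => if hj : j/u < s/u + 1 then (v ⟨j/u, hj⟩ : ℕ) else 0
noncomputable def extv' (s u : ℕ) (v : Fin (s/u + 1) → Fin (s+1)) : ℕ → ℕ :=
  fun j => if hj : 2*(j/(2*u)) < s/u + 1 then (v ⟨2*(j/(2*u)), hj⟩ : ℕ) else 0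

def Ev (s : ℕ) (c : ℝ) (ℓ : ℕ) (v : Fin (s/2^ℓ + 1) → Fin (s+1))
    (ω : Fin s × Fin s → ℕ × ℕ) : Prop :=
  (Reg s (extv s (2^ℓ) v) (extv' s (2^ℓ) v)).card ≤ 2^ℓ * s ∧
    tl s c ℓ < (SX (Reg s (extv s (2^ℓ) v) (extv' s (2^ℓ) v)) ω : ℝ)

def Etop (s : ℕ) (c : ℝ) (r : Fin (s+1)) (ω : Fin s × Fin s → ℕ × ℕ) : Prop :=
  ttop s c < (SX (Reg s (fun _ => (r:ℕ)) (fun _ => 0)) ω : ℝ)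

def good (s : ℕ) (c : ℝ) (ω : Fin s × Fin s → ℕ × ℕ) : Prop :=
  (∀ ℓ ∈ range (Nat.clog 2 s), ∀ v : Fin (s/2^ℓ + 1) → Fin (s+1), ¬ Ev s c ℓ v ω) ∧
    (∀ r : Fin (s+1), ¬ Etop s c r ω)

section ProbSide
variable {c : ℝ}

lemma log_s_pos (hs : 2 ≤ s) : 0 < Real.log s := Real.log_pos (by exact_mod_cast hs)

lemma Dl_pos (hs : 2 ≤ s) (hc : 0 < c) (ℓ : ℕ) : 0 < Dl s c ℓ := by
  have h1 := log_s_pos hs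
  have h2 : (0:ℝ) < Real.log (s+1) := Real.log_pos (by push_cast; linarith [(show (2:ℝ) ≤ s by exact_mod_cast hs)])
  have h3 : (1:ℝ) ≤ (Kl s ℓ : ℝ) := by exact_mod_cast Nat.le_add_left 1 (s / 2^ℓ)
  unfold Dl
  nlinarith

lemma Dtop_pos (hs : 2 ≤ s) (hc : 0 < c) : 0 < Dtop s c := by
  have h1 := log_s_pos hs
  have h2 : (0:ℝ) < Real.log (s+1) := Real.log_pos (by push_cast; linarith [(show (2:ℝ) ≤ s by exact_mod_cast hs)])
  unfold Dtop
  nlinarith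

lemma Pr_Ev_le (hs : 2 ≤ s) (hc : 0 < c) (ℓ : ℕ) (v : Fin (s/2^ℓ + 1) → Fin (s+1)) :
    Pr (Ev s c ℓ v) ≤ ENNReal.ofReal (rexp (-(Dl s c ℓ))) := by
  by_cases hA : (Reg s (extv s (2^ℓ) v) (extv' s (2^ℓ) v)).card ≤ 2^ℓ * s
  · refine le_trans (Pr_mono (fun ω hω => hω.2)) ?_
    exact event_bound _ (2^ℓ * s) hA (by positivity) _ (Dl_pos hs hc ℓ)
  · refine le_trans (Pr_mono (fun ω hω => (hA hω.1 : False))) ?_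
    rw [Pr_False]
    exact zero_le

lemma Pr_Etop_le (hs : 2 ≤ s) (hc : 0 < c) (r : Fin (s+1)) :
    Pr (Etop s c r) ≤ ENNReal.ofReal (rexp (-(Dtop s c))) := by
  have hcard : (Reg s (fun _ => (r:ℕ)) (fun _ => 0)).card ≤ s * s := by
    refine le_trans (card_Reg_le _ _) ?_
    calc (∑ j ∈ range s, ((r:ℕ) - 0)) = s * (r:ℕ) := by
          rw [Finset.sum_const, Finset.card_range, nsmul_eq_mul]; norm_num
      _ ≤ s * s := Nat.mul_le_mul_left s (by omega)
  exact event_bound _ (s * s) hcard (by positivity) _ (Dtop_pos hs hc)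

lemma Pr_bad_le (hs : 2 ≤ s) (hc : 0 < c) :
    Pr (fun ω => ¬ good s c ω)
      ≤ ENNReal.ofReal (((Nat.clog 2 s : ℝ) + 1) * rexp (-((2*c+2) * Real.log s))) := by
  have hps : (0:ℝ) < (s:ℝ) + 1 := by positivity
  have key : ∀ ω : Fin s × Fin s → ℕ × ℕ, ¬ good s c ω →
      (∃ ℓ ∈ range (Nat.clog 2 s), ∃ v ∈ (univ : Finset (Fin (s/2^ℓ + 1) → Fin (s+1))), Ev s c ℓ v ω)
        ∨ (∃ r ∈ (univ : Finset (Fin (s+1))), Etop s c r ω) := by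
    intro ω hbad
    by_cases h1 : ∃ ℓ ∈ range (Nat.clog 2 s), ∃ v ∈ (univ : Finset (Fin (s/2^ℓ + 1) → Fin (s+1))), Ev s c ℓ v ω
    · exact Or.inl h1
    · right
      push_neg at h1
      by_contra h2
      push_neg at h2
      exact hbad ⟨fun ℓ hℓ v => h1 ℓ hℓ v (mem_univ v), fun r => h2 r (mem_univ r)⟩
  refine le_trans (Pr_mono key) ?_
  refine le_trans (Pr_or _ _) ?_
  have hbound1 : Pr (fun ω => ∃ ℓ ∈ range (Nat.clog 2 s),
      ∃ v ∈ (univ : Finset (Fin (s/2^ℓ + 1) → Fin (s+1))), Ev s c ℓ v ω)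
      ≤ (Nat.clog 2 s : ℝ≥0∞) * ENNReal.ofReal (rexp (-((2*c+2) * Real.log s))) := by
    refine le_trans (Pr_exists_le (range (Nat.clog 2 s)) _) ?_
    have step : ∀ ℓ ∈ range (Nat.clog 2 s),
        Pr (fun ω => ∃ v ∈ (univ : Finset (Fin (s/2^ℓ + 1) → Fin (s+1))), Ev s c ℓ v ω)
          ≤ ENNReal.ofReal (rexp (-((2*c+2) * Real.log s))) := by
      intro ℓ _
      refine le_trans (Pr_exists_le univ (fun v => Ev s c ℓ v)) ?_
      have hv : ∀ v ∈ (univ : Finset (Fin (s/2^ℓ + 1) → Fin (s+1))),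
          Pr (Ev s c ℓ v) ≤ ENNReal.ofReal (rexp (-(Dl s c ℓ))) :=
        fun v _ => Pr_Ev_le hs hc ℓ v
      refine le_trans (Finset.sum_le_sum hv) ?_
      rw [Finset.sum_const, nsmul_eq_mul, Finset.card_univ, Fintype.card_fun,
        Fintype.card_fin, Fintype.card_fin]
      rw [← ENNReal.ofReal_natCast ((s+1)^(s/2^ℓ + 1)), ← ENNReal.ofReal_mul (by positivity)]
      apply ENNReal.ofReal_le_ofReal
      have hcast : (((s+1)^(s/2^ℓ + 1) : ℕ) : ℝ) = rexp ((Kl s ℓ) * Real.log (s+1)) := by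
        push_cast
        rw [← Real.exp_log (show (0:ℝ) < (s:ℝ)+1 by positivity), ← Real.exp_nat_mul]
        norm_num [Kl]
      rw [hcast, ← Real.exp_add]
      apply Real.exp_le_exp.mpr
      unfold Dl
      ring_nf
      exact le_refl _
    refine le_trans (Finset.sum_le_sum step) ?_
    rw [Finset.sum_const, Finset.card_range, nsmul_eq_mul]
  have hbound2 : Pr (fun ω => ∃ r ∈ (univ : Finset (Fin (s+1))), Etop s c r ω)
      ≤ ENNReal.ofReal (rexp (-((2*c+2) * Real.log s))) := by
    refine le_trans (Pr_exists_le univ (fun r => Etop s c r)) ?_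
    have hv : ∀ r ∈ (univ : Finset (Fin (s+1))),
        Pr (Etop s c r) ≤ ENNReal.ofReal (rexp (-(Dtop s c))) :=
      fun r _ => Pr_Etop_le hs hc r
    refine le_trans (Finset.sum_le_sum hv) ?_
    rw [Finset.sum_const, nsmul_eq_mul, Finset.card_univ, Fintype.card_fin]
    rw [← ENNReal.ofReal_natCast (s+1), ← ENNReal.ofReal_mul (by positivity)]
    apply ENNReal.ofReal_le_ofReal
    have hcast : ((s+1 : ℕ) : ℝ) = rexp (Real.log (s+1)) := by
      push_cast
      rw [Real.exp_log (show (0:ℝ) < (s:ℝ)+1 by positivity)]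
    rw [hcast, ← Real.exp_add]
    apply Real.exp_le_exp.mpr
    unfold Dtop
    ring_nf
    exact le_refl _
  refine le_trans (add_le_add hbound1 hbound2) ?_
  rw [← ENNReal.ofReal_natCast (Nat.clog 2 s), ← ENNReal.ofReal_mul (by positivity), ← ENNReal.ofReal_add (by positivity) (by positivity)]
  apply ENNReal.ofReal_le_ofReal
  ring_nf
  exact le_refl _
end ProbSide

lemma good_implies {c : ℝ} (hs : 2 ≤ s) (ω : Fin s × Fin s → ℕ × ℕ) (hg : good s c ω)
    (h : Fin s → ℕ) (hmono : Monotone h) (hle : ∀ j, h j ≤ s) :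
    (pathDeviation ω h : ℝ) ≤ (∑ ℓ ∈ range (Nat.clog 2 s), tl s c ℓ) + ttop s c := by
  have hs0 : 0 < s := by omega
  set L := Nat.clog 2 s with hL
  -- extended height function
  set H : ℕ → ℕ := fun j => h ⟨min j (s-1), by omega⟩ with hHdef
  have hH : Monotone H := by
    intro a b hab
    exact hmono (show (⟨min a (s-1), by omega⟩ : Fin s) ≤ ⟨min b (s-1), by omega⟩ by
      simp only [Fin.mk_le_mk]; omega)
  have hHs : ∀ j, H j ≤ s := fun j => hle _
  have hHlt : ∀ j, H j < s + 1 := fun j => Nat.lt_succ_of_le (hHs j)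
  have hpath : pathDeviation ω h = Dev s H ω := by
    unfold pathDeviation Dev
    apply Finset.sum_congr rfl
    intro cc _
    have : H (cc.2 : ℕ) = h cc.2 := by
      simp only [hHdef]
      congr 1
      apply Fin.ext
      simp only []
      omega
    rw [this]
  -- coarsened heights
  set A : ℕ → ℕ → ℕ := fun u j => H (u * (j / u)) with hAdef
  set f : ℕ → ℤ := fun ℓ => Dev s (A (2^ℓ)) ω with hfdef
  have hf0 : f 0 = Dev s H ω := by
    apply Dev_congr
    intro j _
    simp [hAdef]
  have hAle : ∀ ℓ j, A (2^(ℓ+1)) j ≤ A (2^ℓ) j := by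
    intro ℓ j
    apply hH
    rw [pow_succ]
    set u := 2^ℓ
    have h1 : j / (u * 2) = (j / u) / 2 := (Nat.div_div_eq_div_mul j u 2).symm
    rw [h1]
    have h2 : 2 * ((j / u) / 2) ≤ j / u := by omega
    calc u * 2 * (j / u / 2) = u * (2 * (j / u / 2)) := by ring
      _ ≤ u * (j / u) := Nat.mul_le_mul_left u h2
  -- increments are region sums
  have hinc : ∀ ℓ, f ℓ - f (ℓ+1) = SX (Reg s (A (2^ℓ)) (A (2^(ℓ+1)))) ω :=
    fun ℓ => Dev_sub_eq (hAle ℓ) ω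
  -- v for h
  have htele : ∑ ℓ ∈ range L, (f ℓ - f (ℓ+1)) = f 0 - f L := Finset.sum_range_sub' f L
  have hfL : f L = SX (Reg s (fun _ => H 0) (fun _ => 0)) ω := by
    have step1 : f L = Dev s (fun _ => H 0) ω := by
      apply Dev_congr
      intro j hj
      simp only [hAdef]
      congr 1
      have : j < 2^L := lt_of_lt_of_le hj (Nat.le_pow_clog (by norm_num) s)
      rw [Nat.div_eq_of_lt this, Nat.mul_zero]
    have step2 : Dev s (fun _ => (0:ℕ)) ω = 0 := by
      unfold Dev
      simp
    rw [step1, ← Dev_sub_eq (fun j => Nat.zero_le _) ω, step2, sub_zero]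
  -- each increment is bounded on the good event
  have hbound : ∀ ℓ ∈ range L, ((f ℓ - f (ℓ+1) : ℤ) : ℝ) ≤ tl s c ℓ := by
    intro ℓ hℓ
    set u := 2^ℓ with hu
    have hu0 : 0 < u := Nat.pow_pos (by norm_num)
    set v : Fin (s/u + 1) → Fin (s+1) := fun k => ⟨H (u * k), hHlt _⟩ with hv
    have hext : ∀ j < s, extv s u v j = A u j := by
      intro j hj
      have hcond : j/u < s/u + 1 := Nat.lt_succ_of_le (Nat.div_le_div_right (le_of_lt hj))
      simp only [extv, hcond, dif_pos, hv]
      rfl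
    have hext' : ∀ j < s, extv' s u v j = A (2^(ℓ+1)) j := by
      intro j hj
      have hidx : 2*(j/(2*u)) ≤ j/u := by
        have h1 : j / (2*u) = (j / u) / 2 := by
          rw [mul_comm 2 u]
          exact (Nat.div_div_eq_div_mul j u 2).symm
        rw [h1]; omega
      have hcond : 2*(j/(2*u)) < s/u + 1 :=
        Nat.lt_succ_of_le (le_trans hidx (Nat.div_le_div_right (le_of_lt hj)))
      simp only [extv', hcond, dif_pos, hv]
      show H (u * (2*(j/(2*u)))) = H (2^(ℓ+1) * (j / 2^(ℓ+1)))
      congr 1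
      rw [pow_succ, mul_comm 2 u]
      ring
    have hreg : Reg s (extv s u v) (extv' s u v) = Reg s (A u) (A (2^(ℓ+1))) :=
      Reg_congr hext hext'
    have harea : (Reg s (extv s u v) (extv' s u v)).card ≤ u * s := by
      rw [hreg]
      refine le_trans (card_Reg_le _ _) ?_
      have : ∀ j ∈ range s, A u j - A (2^(ℓ+1)) j = H (u * (j / u)) - H ((2*u) * (j / (2*u))) := by
        intro j _
        congr 2
        rw [pow_succ]
        ring
      rw [Finset.sum_congr rfl this]
      exact area_bound H hH hHs u hu0
    have hnotE := hg.1 ℓ hℓ v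
    rw [Ev] at hnotE
    push_neg at hnotE
    have := hnotE harea
    rw [hinc ℓ, ← hreg]
    exact this
  -- top bound
  have htop : ((f L : ℤ) : ℝ) ≤ ttop s c := by
    have hr := hg.2 ⟨H 0, hHlt 0⟩
    rw [Etop] at hr
    push_neg at hr
    rw [hfL]
    exact hr
  -- assemble
  have hsum : (pathDeviation ω h : ℝ) = (∑ ℓ ∈ range L, ((f ℓ - f (ℓ+1) : ℤ) : ℝ)) + ((f L : ℤ) : ℝ) := by
    rw [hpath, ← hf0]
    rw [show (∑ ℓ ∈ range L, ((f ℓ - f (ℓ+1) : ℤ) : ℝ)) = (((∑ ℓ ∈ range L, (f ℓ - f (ℓ+1))) : ℤ) : ℝ) by push_cast; ring]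
    rw [htele]
    push_cast
    ring
  rw [hsum]
  exact add_le_add (Finset.sum_le_sum hbound) htop

section Arith
variable {s : ℕ} {c : ℝ}

lemma log2_lb : (0.6931:ℝ) ≤ Real.log 2 := by
  have := Real.log_two_gt_d9
  linarith

lemma ls_lb (hs : 2 ≤ s) : (0.6931:ℝ) ≤ Real.log s := by
  refine le_trans log2_lb ?_
  apply Real.log_le_log (by norm_num)
  exact_mod_cast hs

lemma lp_le (hs : 2 ≤ s) : Real.log ((s:ℝ)+1) ≤ 2 * Real.log s := by
  have h2 : (2:ℝ) ≤ s := by exact_mod_cast hs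
  have : ((s:ℝ)+1) ≤ (s:ℝ)^2 := by nlinarith
  calc Real.log ((s:ℝ)+1) ≤ Real.log ((s:ℝ)^2) := Real.log_le_log (by positivity) this
    _ = 2 * Real.log s := by rw [Real.log_pow]; norm_num

lemma clog_le (hs : 2 ≤ s) : (Nat.clog 2 s : ℝ) ≤ 3 * Real.log s := by
  have hls := ls_lb hs
  rcases Nat.eq_zero_or_pos (Nat.clog 2 s) with h0 | hpos
  · rw [h0]; norm_num; linarith
  · have hpow : (2:ℕ) ^ (Nat.clog 2 s - 1) < s :=
      Nat.pow_pred_clog_lt_self (by norm_num) (by omega)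
    have hreal : ((Nat.clog 2 s : ℝ) - 1) * Real.log 2 ≤ Real.log s := by
      have hcast : ((2:ℕ)^(Nat.clog 2 s - 1) : ℝ) ≤ (s:ℝ) := by exact_mod_cast hpow.le
      have hlog : Real.log ((2:ℝ)^(Nat.clog 2 s - 1)) ≤ Real.log s := by
        apply Real.log_le_log (by positivity)
        exact_mod_cast hcast
      rw [Real.log_pow] at hlog
      have hc1 : ((Nat.clog 2 s - 1 : ℕ) : ℝ) = (Nat.clog 2 s : ℝ) - 1 := by
        have : 1 ≤ Nat.clog 2 s := hpos
        push_cast [this]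
        ring
      rw [hc1] at hlog
      exact hlog
    have hl2 := log2_lb
    have hl2pos : (0:ℝ) < Real.log 2 := by linarith
    have h1 : (Nat.clog 2 s : ℝ) ≤ 1 + Real.log s / Real.log 2 := by
      rw [← sub_le_iff_le_add']
      calc (Nat.clog 2 s : ℝ) - 1 = ((Nat.clog 2 s : ℝ) - 1) * Real.log 2 / Real.log 2 := by
            field_simp
        _ ≤ Real.log s / Real.log 2 := (div_le_div_iff_of_pos_right hl2pos).mpr hreal
    have : Real.log s / Real.log 2 ≤ Real.log s / 0.6931 := by
      apply div_le_div_of_nonneg_left (by linarith) (by norm_num) log2_lb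
    have hx : Real.log s / 0.6931 ≤ 1.45 * Real.log s := by
      rw [div_le_iff₀ (by norm_num)]
      nlinarith
    nlinarith
end Arith

section Arith2
variable {s : ℕ} {c : ℝ}

lemma sqrt_le_of_sq {x y : ℝ} (hy : 0 ≤ y) (hxy : x ≤ y^2) : Real.sqrt x ≤ y := by
  calc Real.sqrt x ≤ Real.sqrt (y^2) := Real.sqrt_le_sqrt hxy
    _ = y := Real.sqrt_sq hy

lemma tl_le (hs : 2 ≤ s) (hc : 0 < c) (ℓ : ℕ) (hℓ : ℓ < Nat.clog 2 s) :
    tl s c ℓ ≤ ((6*c+18)*s + (6*c+12)) * Real.log s + 6*s*Real.log s * (1/2:ℝ)^ℓ := by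
  have hls := ls_lb hs
  have hlp0 : (0:ℝ) ≤ Real.log ((s:ℝ)+1) := Real.log_nonneg (by nlinarith [Nat.cast_nonneg (α := ℝ) s])
  have hlp := lp_le hs
  have hsR : (2:ℝ) ≤ s := by exact_mod_cast hs
  have h2l : (2:ℝ)^ℓ ≤ s := by
    have hnat : 2^ℓ < s := by
      calc 2^ℓ ≤ 2^(Nat.clog 2 s - 1) := Nat.pow_le_pow_right (by norm_num) (by omega)
        _ < s := Nat.pow_pred_clog_lt_self (by norm_num) (by omega)
    exact_mod_cast hnat.le
  have h2l0 : (0:ℝ) < 2^ℓ := by positivity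
  have hK : (Kl s ℓ : ℝ) ≤ (s:ℝ)/2^ℓ + 1 := by
    unfold Kl
    push_cast
    have := Nat.cast_div_le (α := ℝ) (m := s) (n := 2^ℓ)
    push_cast at this
    linarith
  have hK0 : (0:ℝ) ≤ (Kl s ℓ : ℝ) := Nat.cast_nonneg _
  have hD : Dl s c ℓ ≤ 2*(s:ℝ)/2^ℓ * Real.log s + (2*c+4) * Real.log s := by
    unfold Dl
    have hKlp : (Kl s ℓ : ℝ) * Real.log ((s:ℝ)+1) ≤ ((s:ℝ)/2^ℓ + 1) * (2 * Real.log s) :=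
      mul_le_mul hK hlp hlp0 (by positivity)
    have hexpand : ((s:ℝ)/2^ℓ + 1) * (2 * Real.log s)
        = 2*(s:ℝ)/2^ℓ * Real.log s + 2 * Real.log s := by
      field_simp
    push_cast
    linarith [hKlp, hexpand]
  have hD0 : (0:ℝ) ≤ Dl s c ℓ := by
    unfold Dl
    have : (0:ℝ) ≤ Real.log s := by linarith
    positivity
  have hcast : ((2^ℓ * s : ℕ):ℝ) = (2:ℝ)^ℓ * s := by push_cast; ring
  have hdivmul : (2:ℝ)^ℓ * ((s:ℝ)/2^ℓ) = s := by field_simp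
  have hmD : ((2^ℓ * s : ℕ):ℝ) * Dl s c ℓ ≤ (2*c+6) * (s:ℝ)^2 * Real.log s := by
    rw [hcast]
    calc (2:ℝ)^ℓ * s * Dl s c ℓ ≤ (2:ℝ)^ℓ * s * (2*(s:ℝ)/2^ℓ * Real.log s + (2*c+4) * Real.log s) := by
          apply mul_le_mul_of_nonneg_left hD (by positivity)
      _ = 2*(s:ℝ)^2*Real.log s + (2:ℝ)^ℓ * s * (2*c+4) * Real.log s := by
          field_simp
      _ ≤ 2*(s:ℝ)^2*Real.log s + (s:ℝ) * s * (2*c+4) * Real.log s := by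
          have : (2:ℝ)^ℓ * s * (2*c+4) * Real.log s ≤ (s:ℝ) * s * (2*c+4) * Real.log s := by
            apply mul_le_mul_of_nonneg_right ?_ (by linarith)
            apply mul_le_mul_of_nonneg_right ?_ (by linarith)
            apply mul_le_mul_of_nonneg_right h2l (by linarith)
          linarith
      _ = (2*c+6) * (s:ℝ)^2 * Real.log s := by ring
  have hsqrt : Real.sqrt (((2^ℓ * s : ℕ):ℝ) * Dl s c ℓ) ≤ (2*c+6) * s * Real.log s := by
    apply sqrt_le_of_sq (by nlinarith)
    have key : 1 ≤ (2*c+6) * Real.log s := by nlinarith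
    have hX0 : (0:ℝ) ≤ (2*c+6) * (s:ℝ)^2 * Real.log s := by
      have : (0:ℝ) ≤ Real.log s := by linarith
      positivity
    calc ((2^ℓ * s : ℕ):ℝ) * Dl s c ℓ ≤ (2*c+6) * (s:ℝ)^2 * Real.log s := hmD
      _ = 1 * ((2*c+6) * (s:ℝ)^2 * Real.log s) := by ring
      _ ≤ ((2*c+6) * Real.log s) * ((2*c+6) * (s:ℝ)^2 * Real.log s) :=
          mul_le_mul_of_nonneg_right key hX0
      _ = ((2*c+6) * s * Real.log s)^2 := by ring
  unfold tl
  have h3D : 3 * Dl s c ℓ ≤ 6*(s:ℝ)*Real.log s * (1/2:ℝ)^ℓ + 3*(2*c+4)*Real.log s := by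
    have heq : 2*(s:ℝ)/2^ℓ * Real.log s = 2*(s:ℝ)*Real.log s * (1/2:ℝ)^ℓ := by
      rw [div_pow, one_pow]
      field_simp
      try ring
    nlinarith [hD]
  nlinarith [hsqrt]
end Arith2

section Arith3
variable {s : ℕ} {c : ℝ}

lemma ttop_le (hs : 2 ≤ s) (hc : 0 < c) :
    ttop s c ≤ (3*(2*c+4)*s + 3*(2*c+4)) * Real.log s := by
  have hls := ls_lb hs
  have hlp := lp_le hs
  have hsR : (2:ℝ) ≤ s := by exact_mod_cast hs
  have hD : Dtop s c ≤ (2*c+4) * Real.log s := by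
    unfold Dtop
    push_cast
    nlinarith
  have hD0 : (0:ℝ) ≤ Dtop s c := by
    unfold Dtop
    have h2 : (0:ℝ) ≤ Real.log ((s:ℝ)+1) := Real.log_nonneg (by nlinarith [Nat.cast_nonneg (α := ℝ) s])
    have : (0:ℝ) ≤ Real.log s := by linarith
    push_cast
    nlinarith
  have hmD : ((s * s : ℕ):ℝ) * Dtop s c ≤ (2*c+4) * (s:ℝ)^2 * Real.log s := by
    have hcast : ((s * s : ℕ):ℝ) = (s:ℝ)^2 := by push_cast; ring
    rw [hcast]
    nlinarith [hD, sq_nonneg (s:ℝ)]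
  have hsqrt : Real.sqrt (((s * s : ℕ):ℝ) * Dtop s c) ≤ (2*c+4) * s * Real.log s := by
    apply sqrt_le_of_sq (by nlinarith)
    have key : 1 ≤ (2*c+4) * Real.log s := by nlinarith
    have hX0 : (0:ℝ) ≤ (2*c+4) * (s:ℝ)^2 * Real.log s := by nlinarith
    calc ((s * s : ℕ):ℝ) * Dtop s c ≤ (2*c+4) * (s:ℝ)^2 * Real.log s := hmD
      _ = 1 * ((2*c+4) * (s:ℝ)^2 * Real.log s) := by ring
      _ ≤ ((2*c+4) * Real.log s) * ((2*c+4) * (s:ℝ)^2 * Real.log s) :=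
          mul_le_mul_of_nonneg_right key hX0
      _ = ((2*c+4) * s * Real.log s)^2 := by ring
  unfold ttop
  nlinarith [hsqrt, hD]

lemma total_le (hs : 2 ≤ s) (hc : 0 < c) :
    (∑ ℓ ∈ range (Nat.clog 2 s), tl s c ℓ) + ttop s c
      ≤ 400*(c+1) * s * Real.log s ^ 2 := by
  have hls := ls_lb hs
  have hsR : (2:ℝ) ≤ s := by exact_mod_cast hs
  have hL := clog_le hs
  have hL0 : (0:ℝ) ≤ (Nat.clog 2 s : ℝ) := Nat.cast_nonneg _
  have hsum : (∑ ℓ ∈ range (Nat.clog 2 s), tl s c ℓ)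
      ≤ (Nat.clog 2 s : ℝ) * (((6*c+18)*s + (6*c+12)) * Real.log s)
          + 6*s*Real.log s * 2 := by
    calc (∑ ℓ ∈ range (Nat.clog 2 s), tl s c ℓ)
        ≤ ∑ ℓ ∈ range (Nat.clog 2 s),
            (((6*c+18)*s + (6*c+12)) * Real.log s + 6*s*Real.log s * (1/2:ℝ)^ℓ) := by
          apply Finset.sum_le_sum
          intro ℓ hℓ
          exact tl_le hs hc ℓ (mem_range.mp hℓ)
      _ = (Nat.clog 2 s : ℝ) * (((6*c+18)*s + (6*c+12)) * Real.log s)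
            + 6*s*Real.log s * (∑ ℓ ∈ range (Nat.clog 2 s), (1/2:ℝ)^ℓ) := by
          rw [Finset.sum_add_distrib, Finset.sum_const, Finset.card_range, nsmul_eq_mul,
            ← Finset.mul_sum]
      _ ≤ (Nat.clog 2 s : ℝ) * (((6*c+18)*s + (6*c+12)) * Real.log s)
            + 6*s*Real.log s * 2 := by
          have hgeom : (∑ ℓ ∈ range (Nat.clog 2 s), (1/2:ℝ)^ℓ) ≤ 2 := sum_geometric_two_le _
          have h0 : (0:ℝ) ≤ 6*s*Real.log s := by nlinarith
          nlinarith
  have httop := ttop_le hs hc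
  -- combine
  have hbig : (Nat.clog 2 s : ℝ) * (((6*c+18)*s + (6*c+12)) * Real.log s)
      ≤ 3 * Real.log s * (((6*c+18)*s + (6*c+12)) * Real.log s) := by
    apply mul_le_mul_of_nonneg_right hL
    have hls0 : (0:ℝ) ≤ Real.log s := by linarith
    have : (0:ℝ) ≤ (6*c+18)*(s:ℝ) + (6*c+12) := by nlinarith
    exact mul_nonneg this hls0
  have hls0 : (0:ℝ) ≤ Real.log s := by linarith
  have ha2 : (0:ℝ) ≤ Real.log s ^ 2 := sq_nonneg _
  have hls15 : Real.log s ≤ 1.5 * Real.log s ^ 2 := by nlinarith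
  have h1 : (0:ℝ) ≤ ((s:ℝ)-1) * Real.log s ^ 2 := by nlinarith
  have h2 : (s:ℝ) * Real.log s ≤ 1.5 * ((s:ℝ) * Real.log s ^ 2) := by
    nlinarith [mul_le_mul_of_nonneg_left hls15 (show (0:ℝ) ≤ (s:ℝ) by linarith)]
  have h3 : Real.log s ≤ 1.5 * ((s:ℝ) * Real.log s ^ 2) := by nlinarith [h1, hls15]
  nlinarith [hsum, httop, hbig, h1, h2, h3, hc.le,
    mul_nonneg hc.le h1, mul_le_mul_of_nonneg_left h2 hc.le,
    mul_le_mul_of_nonneg_left h3 hc.le]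
end Arith3

section Arith4
variable {s : ℕ} {c : ℝ}

lemma prob_arith (hs : 2 ≤ s) (hc : 0 < c) :
    ((Nat.clog 2 s : ℝ) + 1) * rexp (-((2*c+2) * Real.log s))
      ≤ 100*(c+1) * ((s:ℝ)^2) ^ (-c : ℝ) := by
  have hls := ls_lb hs
  have hsR : (2:ℝ) ≤ s := by exact_mod_cast hs
  have hL := clog_le hs
  have hrw : ((s:ℝ)^2) ^ (-c : ℝ) = rexp (-(2*c*Real.log s)) := by
    rw [Real.rpow_def_of_pos (by positivity), Real.log_pow]
    push_cast
    ring_nf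
  have hlss : Real.log s ≤ (s:ℝ) - 1 := by
    have := Real.log_le_sub_one_of_pos (show (0:ℝ) < s by linarith)
    linarith
  have hLs2 : (Nat.clog 2 s : ℝ) + 1 ≤ (s:ℝ)^2 := by nlinarith
  have hexp2 : (s:ℝ)^2 = rexp (2 * Real.log s) := by
    rw [show (2:ℝ) * Real.log s = Real.log s + Real.log s by ring, Real.exp_add,
      Real.exp_log (by linarith)]
    ring
  have hexppos : (0:ℝ) < rexp (-((2*c+2) * Real.log s)) := Real.exp_pos _
  calc ((Nat.clog 2 s : ℝ) + 1) * rexp (-((2*c+2) * Real.log s))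
      ≤ (s:ℝ)^2 * rexp (-((2*c+2) * Real.log s)) :=
        mul_le_mul_of_nonneg_right hLs2 hexppos.le
    _ = rexp (-(2*c*Real.log s)) := by
        rw [hexp2, ← Real.exp_add]
        congr 1
        ring
    _ = 1 * (((s:ℝ)^2) ^ (-c : ℝ)) := by rw [hrw]; ring
    _ ≤ 100*(c+1) * ((s:ℝ)^2) ^ (-c : ℝ) := by
        apply mul_le_mul_of_nonneg_right (by linarith)
        rw [hrw]
        exact (Real.exp_pos _).le
end Arith4


end Stmt9Aux

/-- In a `√μ × √μ` grid (`s = √μ`, `μ = s²`) with independent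
`Pois(1)` blue and red dots per cell, with probability `1 - 1/poly(μ)` every monotone
lattice path through the grid has blue-red deviation at most `O(√μ log² μ)`. -/
theorem stmt9 (c : ℝ) (hc : 0 < c) :
    ∃ C : ℝ, 0 < C ∧
      ∀ (s : ℕ), 2 ≤ s →
      (∑' ω : Fin s × Fin s → ℕ × ℕ,
          if (∀ h : Fin s → ℕ, Monotone h → (∀ j, h j ≤ s) →
              (pathDeviation ω h : ℝ) ≤ C * s * (Real.log ((s : ℝ) ^ 2)) ^ 2)
            then gridPMF ω else 0)
        ≥ 1 - C * ((s : ℝ) ^ 2) ^ (-c) := by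
  refine ⟨100*(c+1), by linarith, ?_⟩
  intro s hs
  have hε0 : (0:ℝ) ≤ 100*(c+1) * ((s:ℝ)^2) ^ (-c : ℝ) := by positivity
  apply Stmt9Aux.good_ge _ _ hε0
  refine le_trans (Stmt9Aux.Pr_mono ?_)
    (le_trans (Stmt9Aux.Pr_bad_le hs hc)
      (ENNReal.ofReal_le_ofReal (Stmt9Aux.prob_arith hs hc)))
  intro ω hnpc hgood
  apply hnpc
  intro h hmono hle
  have hbd := Stmt9Aux.good_implies hs ω hgood h hmono hle
  have htot := Stmt9Aux.total_le (c := c) hs hc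
  have hrw : Real.log ((s:ℝ)^2) = 2 * Real.log s := by
    rw [Real.log_pow]
    norm_num
  rw [hrw]
  calc (pathDeviation ω h : ℝ)
      ≤ (∑ ℓ ∈ Finset.range (Nat.clog 2 s), Stmt9Aux.tl s c ℓ) + Stmt9Aux.ttop s c := hbd
    _ ≤ 400*(c+1) * s * Real.log s ^ 2 := htot
    _ = 100*(c+1) * s * (2 * Real.log s) ^ 2 := by ring
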